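/- Let K be a complex Hilbert space and let D be a countable set of bounded linear operators on K. Then there exists a closed separable subspace K₁ of K such that T(K₁) ⊆ K₁ and T*(K₁) ⊆ K₁ for every T ∈ D, and such that for every bounded operator A belonging to the closure of D in the operator-norm topology, the restriction of A to K₁ (a bounded operator on K₁) has operator norm equal to ‖A‖. -/

import Mathlib

/-- given a countable set `D` of bounded operators on a Hilbert space `K`,
there is a closed separable subspace `K₁` of `K`, invariant under every `T ∈ D` and its
adjoint, such that the restriction to `K₁` of any operator `A` in the operator-norm closure
of `D` has the same operator norm as `A`. -/
theorem stmt1 (K : Type*) [NormedAddCommGroup K] [InnerProductSpace ℂ K] [CompleteSpace K]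
    (D : Set (K →L[ℂ] K)) (hD : D.Countable) :
    ∃ K₁ : Submodule ℂ K,
      IsClosed (K₁ : Set K) ∧
      TopologicalSpace.IsSeparable (K₁ : Set K) ∧
      (∀ T ∈ D, (∀ x ∈ K₁, T x ∈ K₁) ∧
        (∀ x ∈ K₁, ContinuousLinearMap.adjoint T x ∈ K₁)) ∧
      (∀ A ∈ closure D, ∃ B : K₁ →L[ℂ] K₁,
        (∀ x : K₁, (B x : K) = A (x : K)) ∧ ‖B‖ = ‖A‖) := by
  classical
  -- witnesses nearly attaining the norm
  have hwit : ∀ T : K →L[ℂ] K, ∀ n : ℕ,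
      ∃ x : K, ‖x‖ ≤ 1 ∧ ‖T‖ - 1 / (n + 1) ≤ ‖T x‖ := by
    intro T n
    have h1 : (0:ℝ) < 1 / (n + 1) := by positivity
    have h2 : ‖T‖ - 1 / (n + 1) < ‖T‖ := by linarith
    rcases lt_or_ge (‖T‖ - 1 / (n + 1)) 0 with h | h
    · exact ⟨0, by simp, by rw [map_zero, norm_zero]; linarith⟩
    · obtain ⟨x, hx, hx2⟩ := T.exists_lt_apply_of_lt_opNorm h2
      exact ⟨x, hx.le, hx2.le⟩
  choose w hw1 hw2 using hwit
  -- the countable set of witnesses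
  set C : Set K := ⋃ T ∈ D, Set.range (w T) with hC
  have hCc : C.Countable := hD.biUnion fun T _ => Set.countable_range _
  -- the *-closed family
  set S : Set (K →L[ℂ] K) := D ∪ (ContinuousLinearMap.adjoint '' D) with hS
  have hSc : S.Countable := hD.union (hD.image _)
  -- the orbit of C under words in S
  set L : Set (List (K →L[ℂ] K)) := {l | ∀ T ∈ l, T ∈ S} with hL
  have hLc : L.Countable := by
    have := hSc.to_subtype
    have : L ⊆ Set.range (List.map (Subtype.val : S → _)) := by
      intro l hl
      refine ⟨l.attach.map fun x => ⟨x.1, hl x.1 x.2⟩, ?_⟩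
      simp [List.map_map, Function.comp]
    exact (Set.countable_range _).mono this
  set G : Set K := Set.image2 (fun (l : List (K →L[ℂ] K)) (x : K) =>
    l.foldr (fun T v => T v) x) L C with hG
  have hGc : G.Countable := hLc.image2 hCc _
  have hCG : C ⊆ G := fun x hx => ⟨[], fun T h => absurd h List.not_mem_nil, x, hx, rfl⟩
  have hSG : ∀ T ∈ S, ∀ y ∈ G, T y ∈ G := by
    rintro T hT y ⟨l, hl, x, hx, rfl⟩
    refine ⟨T :: l, ?_, x, hx, rfl⟩
    intro U hU
    rcases List.mem_cons.1 hU with h | h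
    · exact h ▸ hT
    · exact hl U h
  -- the subspace
  set M : Submodule ℂ K := Submodule.span ℂ G with hM
  set K₁ : Submodule ℂ K := M.topologicalClosure with hK₁
  have hMK₁ : (M : Set K) ⊆ (K₁ : Set K) := Submodule.le_topologicalClosure M
  have hclosed : IsClosed (K₁ : Set K) := Submodule.isClosed_topologicalClosure M
  -- invariance of K₁ under members of S
  have hinvS : ∀ T ∈ S, ∀ x ∈ K₁, T x ∈ K₁ := by
    intro T hT x hx
    have hmapsM : Set.MapsTo T (M : Set K) (M : Set K) := by
      intro y hy
      have : M.map (T : K →ₗ[ℂ] K) ≤ M := by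
        rw [hM, Submodule.map_span, Submodule.span_le]
        intro z hz
        rcases hz with ⟨u, hu, rfl⟩
        exact Submodule.subset_span (hSG T hT u hu)
      exact this ⟨y, hy, rfl⟩
    have : x ∈ closure (M : Set K) := hx
    exact map_mem_closure T.continuous this hmapsM
  -- invariance of K₁ under members of the closure of D
  have hinvA : ∀ A ∈ closure D, ∀ x ∈ K₁, A x ∈ K₁ := by
    intro A hA x hx
    obtain ⟨u, hu, hlim⟩ := mem_closure_iff_seq_limit.1 hA
    have hlim' : Filter.Tendsto (fun n => u n x) Filter.atTop (nhds (A x)) := by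
      have : Filter.Tendsto (fun n => (u n - A) x + A x) Filter.atTop (nhds (0 + A x)) := by
        refine Filter.Tendsto.add ?_ tendsto_const_nhds
        have hnorm : Filter.Tendsto (fun n => ‖(u n - A) x‖) Filter.atTop (nhds 0) := by
          have h1 : Filter.Tendsto (fun n => ‖u n - A‖ * ‖x‖) Filter.atTop (nhds 0) := by
            have : Filter.Tendsto (fun n => ‖u n - A‖) Filter.atTop (nhds 0) := by
              simpa using (tendsto_iff_norm_sub_tendsto_zero.1 hlim)
            simpa using this.mul_const ‖x‖
          exact squeeze_zero (fun n => norm_nonneg _)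
            (fun n => ContinuousLinearMap.le_opNorm _ _) h1
        exact tendsto_zero_iff_norm_tendsto_zero.2 hnorm
      simpa using this
    exact hclosed.mem_of_tendsto hlim'
      (Filter.Eventually.of_forall fun n => hinvS (u n) (Or.inl (hu n)) x hx)
  refine ⟨K₁, hclosed, ?_, ?_, ?_⟩
  · exact (hGc.isSeparable.span).closure
  · intro T hT
    exact ⟨hinvS T (Or.inl hT), hinvS (ContinuousLinearMap.adjoint T)
      (Or.inr ⟨T, hT, rfl⟩)⟩
  · intro A hA
    have hAinv : ∀ x : K, x ∈ K₁ → A x ∈ K₁ := hinvA A hA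
    set B : K₁ →L[ℂ] K₁ :=
      (A.comp K₁.subtypeL).codRestrict K₁ (fun x => hAinv x x.2) with hB
    have hBapp : ∀ x : K₁, (B x : K) = A (x : K) := fun x => rfl
    refine ⟨B, hBapp, le_antisymm ?_ ?_⟩
    · refine ContinuousLinearMap.opNorm_le_bound _ (norm_nonneg A) fun x => ?_
      have : ‖B x‖ = ‖A (x : K)‖ := congrArg norm (hBapp x)
      rw [this]
      calc ‖A (x : K)‖ ≤ ‖A‖ * ‖(x : K)‖ := A.le_opNorm _
        _ = ‖A‖ * ‖x‖ := rfl
    · -- ‖A‖ ≤ ‖B‖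
      refine le_of_forall_pos_le_add fun ε hε => ?_
      obtain ⟨T, hTD, hTA⟩ := Metric.mem_closure_iff.1 hA (ε/3) (by linarith)
      obtain ⟨n, hn⟩ := exists_nat_one_div_lt (show (0:ℝ) < ε/3 by linarith)
      have hdist : ‖A - T‖ < ε/3 := by
        rw [← dist_eq_norm]; exact hTA
      set x : K := w T n with hx
      have hxC : x ∈ C := Set.mem_biUnion hTD ⟨n, rfl⟩
      have hxK₁ : x ∈ K₁ := hMK₁ (Submodule.subset_span (hCG hxC))
      have hxn : ‖x‖ ≤ 1 := hw1 T n
      have hTx : ‖T‖ - 1 / (n + 1) ≤ ‖T x‖ := hw2 T n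
      have hAx : ‖B ⟨x, hxK₁⟩‖ = ‖A x‖ := congrArg norm (hBapp ⟨x, hxK₁⟩)
      have hAxB : ‖A x‖ ≤ ‖B‖ := by
        rw [← hAx]
        calc ‖B ⟨x, hxK₁⟩‖ ≤ ‖B‖ * ‖(⟨x, hxK₁⟩ : K₁)‖ := B.le_opNorm _
          _ ≤ ‖B‖ * 1 := by
            exact mul_le_mul_of_nonneg_left (by simpa using hxn) (norm_nonneg B)
          _ = ‖B‖ := mul_one _
      have h1 : ‖A‖ ≤ ‖T‖ + ε/3 := by
        have := norm_sub_norm_le A T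
        linarith [hdist]
      have h2 : ‖T x‖ ≤ ‖A x‖ + ε/3 := by
        have h3 : ‖T x - A x‖ ≤ ‖T - A‖ * ‖x‖ := by
          simpa using (T - A).le_opNorm x
        have h4 : ‖T - A‖ = ‖A - T‖ := by rw [← norm_neg (T - A)]; simp
        have h5 : ‖T x‖ - ‖A x‖ ≤ ‖T x - A x‖ := norm_sub_norm_le _ _
        nlinarith [norm_nonneg (A - T), norm_nonneg x]
      have h6 : (1:ℝ) / (n + 1) < ε/3 := hn
      linarith
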